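/- With notation as above (K field, σ ∈ Aut(K) with σ^n = id, p ∈ K^× fixed by σ, ι and b as defined), the subset D = { Σ_{i=0}^{n−1} ι(a_i)·b^i : a_0,…,a_{n−1} ∈ K } of M_n(K) is a subring of M_n(K), and the map K^n → M_n(K), (a_0,…,a_{n−1}) ↦ Σ_{i=0}^{n−1} ι(a_i)·b^i, is injective and additive. -/
import Mathlib

def bMat (n : ℕ) (K : Type*) [Field K] (p : K) : Matrix (Fin n) (Fin n) K :=
  Matrix.of fun i j =>
    if (i : ℕ) + 1 = (j : ℕ) then 1
    else if (i : ℕ) = n - 1 ∧ (j : ℕ) = 0 then p else 0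

def iotaMat (n : ℕ) (K : Type*) [Field K] (σ : K ≃+* K) (a : K) :
    Matrix (Fin n) (Fin n) K :=
  Matrix.diagonal fun j : Fin n => (σ ^ (n - (j : ℕ))) a

section aux
variable {n : ℕ} {K : Type*} [Field K] (σ : K ≃+* K) (p : K)

lemma iota_add (a b : K) :
    iotaMat n K σ (a + b) = iotaMat n K σ a + iotaMat n K σ b := by
  ext i j
  by_cases h : i = j <;>
    simp [iotaMat, Matrix.diagonal_apply, h]

lemma iota_mul (a b : K) :
    iotaMat n K σ a * iotaMat n K σ b = iotaMat n K σ (a * b) := by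
  unfold iotaMat
  rw [Matrix.diagonal_mul_diagonal]
  congr 1; ext j; simp

lemma iota_zero : iotaMat n K σ 0 = 0 := by simp [iotaMat]

lemma iota_one : iotaMat n K σ 1 = 1 := by simp [iotaMat]

lemma iota_neg (a : K) : iotaMat n K σ (-a) = -iotaMat n K σ a := by
  ext i j
  by_cases h : i = j <;>
    simp [iotaMat, Matrix.diagonal_apply, h]

/-- key entry formula for powers of b -/
lemma bpow_apply (hn : 1 ≤ n) (i : ℕ) (r c : Fin n) :
    (bMat n K p ^ i) r c =
      if (c : ℕ) = ((r : ℕ) + i) % n then p ^ (((r : ℕ) + i) / n) else 0 := by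
  induction i generalizing c with
  | zero =>
    rw [pow_zero]
    rw [Nat.add_zero, Nat.mod_eq_of_lt r.isLt, Nat.div_eq_of_lt r.isLt, pow_zero]
    rw [Matrix.one_apply]
    simp [Fin.ext_iff, eq_comm]
  | succ i ih =>
    rw [pow_succ, Matrix.mul_apply]
    have hk : ((r : ℕ) + i) % n < n := Nat.mod_lt _ hn
    set k₀ : Fin n := ⟨((r : ℕ) + i) % n, hk⟩ with hk₀
    rw [Finset.sum_eq_single k₀]
    · rw [ih k₀, if_pos rfl]
      have key : (n : ℕ) * (((r : ℕ) + i) / n) + (((r : ℕ) + i) % n) = (r : ℕ) + i :=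
        Nat.div_add_mod _ n
      by_cases hc : ((r : ℕ) + i) % n + 1 < n
      · -- no wraparound
        have hmod : ((r : ℕ) + (i + 1)) % n = ((r : ℕ) + i) % n + 1 := by
          have h3 : (r : ℕ) + (i + 1) = n * (((r : ℕ) + i) / n) + ((((r : ℕ) + i) % n) + 1) := by
            omega
          rw [h3, Nat.mul_add_mod, Nat.mod_eq_of_lt hc]
        have hdiv : ((r : ℕ) + (i + 1)) / n = ((r : ℕ) + i) / n := by
          have h3 : (r : ℕ) + (i + 1) = n * (((r : ℕ) + i) / n) + ((((r : ℕ) + i) % n) + 1) := by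
            omega
          rw [h3, Nat.mul_add_div hn, Nat.div_eq_of_lt hc, Nat.add_zero]
        rw [hmod, hdiv]
        have hb : bMat n K p k₀ c = if (c : ℕ) = ((r : ℕ) + i) % n + 1 then 1 else 0 := by
          show (if ((((r : ℕ) + i) % n) + 1 = (c : ℕ)) then (1:K)
            else if (((r : ℕ) + i) % n) = n - 1 ∧ (c : ℕ) = 0 then p else 0) = _
          by_cases h1 : ((r : ℕ) + i) % n + 1 = (c : ℕ)
          · rw [if_pos h1, if_pos h1.symm]
          · rw [if_neg h1,
                if_neg (fun h => h1 h.symm : ¬((c:ℕ) = ((r:ℕ)+i) % n + 1)),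
                if_neg (by omega : ¬((((r:ℕ)+i) % n) = n - 1 ∧ (c:ℕ) = 0))]
        rw [hb]
        by_cases h2 : (c : ℕ) = ((r : ℕ) + i) % n + 1
        · rw [if_pos h2, if_pos h2, mul_one]
        · rw [if_neg h2, if_neg h2, mul_zero]
      · -- wraparound: (r+i)%n = n-1
        have hlast : ((r : ℕ) + i) % n = n - 1 := by omega
        have hmod : ((r : ℕ) + (i + 1)) % n = 0 := by
          have h3 : (r : ℕ) + (i + 1) = n * ((((r : ℕ) + i) / n) + 1) + 0 := by
            rw [Nat.mul_add, Nat.mul_one]; omega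
          rw [h3, Nat.mul_add_mod, Nat.mod_eq_of_lt hn]
        have hdiv : ((r : ℕ) + (i + 1)) / n = ((r : ℕ) + i) / n + 1 := by
          have h3 : (r : ℕ) + (i + 1) = n * ((((r : ℕ) + i) / n) + 1) + 0 := by
            rw [Nat.mul_add, Nat.mul_one]; omega
          rw [h3, Nat.mul_add_div hn, Nat.div_eq_of_lt hn, Nat.add_zero]
        rw [hmod, hdiv]
        have hb : bMat n K p k₀ c = if (c : ℕ) = 0 then p else 0 := by
          show (if ((((r : ℕ) + i) % n) + 1 = (c : ℕ)) then (1:K)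
            else if (((r : ℕ) + i) % n) = n - 1 ∧ (c : ℕ) = 0 then p else 0) = _
          have hc' := c.isLt
          rw [if_neg (by omega : ¬ ((((r : ℕ) + i) % n) + 1 = (c : ℕ)))]
          by_cases h2 : (c : ℕ) = 0
          · rw [if_pos ⟨hlast, h2⟩, if_pos h2]
          · rw [if_neg (fun h => h2 h.2), if_neg h2]
        rw [hb]
        by_cases h2 : (c : ℕ) = 0
        · rw [if_pos h2, if_pos h2, pow_succ]
        · rw [if_neg h2, if_neg h2, mul_zero]
    · intro k _ hkne
      rw [ih k, if_neg, zero_mul]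
      intro h
      exact hkne (Fin.ext h)
    · intro h
      exact absurd (Finset.mem_univ k₀) h

lemma bpow_n (hn : 1 ≤ n) : bMat n K p ^ n = p • (1 : Matrix (Fin n) (Fin n) K) := by
  ext r c
  rw [bpow_apply p hn]
  have h1 : ((r : ℕ) + n) % n = (r : ℕ) := by
    rw [Nat.add_mod_right, Nat.mod_eq_of_lt r.isLt]
  have h2 : ((r : ℕ) + n) / n = 1 := by
    rw [Nat.add_div_right _ hn, Nat.div_eq_of_lt r.isLt]
  rw [h1, h2, pow_one]
  rw [Matrix.smul_apply, Matrix.one_apply]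
  by_cases h : (c : ℕ) = (r : ℕ)
  · rw [if_pos h, if_pos (Fin.ext h.symm), smul_eq_mul, mul_one]
  · rw [if_neg h, if_neg (fun hh => h (congrArg Fin.val hh.symm)), smul_eq_mul, mul_zero]

lemma b_iota (hn : 1 ≤ n) (hσ : σ ^ n = 1) (a : K) :
    bMat n K p * iotaMat n K σ a = iotaMat n K σ (σ⁻¹ a) * bMat n K p := by
  ext r c
  unfold iotaMat
  rw [Matrix.mul_diagonal, Matrix.diagonal_mul]
  show (if ((r : ℕ) + 1 = (c : ℕ)) then (1:K)
      else if (r : ℕ) = n - 1 ∧ (c : ℕ) = 0 then p else 0) * (σ ^ (n - (c:ℕ))) a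
    = (σ ^ (n - (r:ℕ))) (σ⁻¹ a) * (if ((r : ℕ) + 1 = (c : ℕ)) then (1:K)
      else if (r : ℕ) = n - 1 ∧ (c : ℕ) = 0 then p else 0)
  by_cases h1 : (r : ℕ) + 1 = (c : ℕ)
  · rw [if_pos h1, one_mul, mul_one]
    have h2 : n - (r : ℕ) = (n - (c : ℕ)) + 1 := by omega
    rw [h2, pow_succ]
    show (σ ^ (n - (c:ℕ))) a = (σ ^ (n - (c:ℕ))) (σ (σ⁻¹ a))
    have hssa : σ (σ⁻¹ a) = a := σ.apply_symm_apply a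
    rw [hssa]
  · rw [if_neg h1]
    by_cases h2 : (r : ℕ) = n - 1 ∧ (c : ℕ) = 0
    · rw [if_pos h2]
      have hr : n - (r : ℕ) = 1 := by omega
      have hcn : n - (c : ℕ) = n := by omega
      rw [hr, hcn, pow_one, hσ]
      show p * a = σ (σ⁻¹ a) * p
      have hssa : σ (σ⁻¹ a) = a := σ.apply_symm_apply a
      rw [hssa, mul_comm]
    · rw [if_neg h2, zero_mul, mul_zero]

lemma bpow_iota (hn : 1 ≤ n) (hσ : σ ^ n = 1) (i : ℕ) (a : K) :
    bMat n K p ^ i * iotaMat n K σ a = iotaMat n K σ ((σ⁻¹ ^ i) a) * bMat n K p ^ i := by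
  induction i generalizing a with
  | zero => rw [pow_zero, pow_zero, one_mul, mul_one]; rfl
  | succ i ih =>
    have hps : (σ⁻¹ ^ (i + 1)) a = (σ⁻¹ ^ i) (σ⁻¹ a) := by rw [pow_succ]; rfl
    rw [pow_succ, mul_assoc, b_iota σ p hn hσ, ← mul_assoc, ih (σ⁻¹ a), mul_assoc,
      ← pow_succ, hps]

lemma sigma_pow_fix (hpfix : σ p = p) (k : ℕ) : (σ ^ k) p = p := by
  induction k with
  | zero => rfl
  | succ k ih =>
    rw [pow_succ]
    show (σ ^ k) (σ p) = p
    rw [hpfix, ih]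

lemma smul_iota (hpfix : σ p = p) (q : ℕ) (a : K) :
    (p ^ q) • iotaMat n K σ a = iotaMat n K σ (p ^ q * a) := by
  ext i j
  rw [iotaMat, iotaMat, Matrix.smul_apply, Matrix.diagonal_apply, Matrix.diagonal_apply]
  by_cases h : i = j
  · rw [if_pos h, if_pos h, map_mul, map_pow, sigma_pow_fix σ p hpfix, smul_eq_mul]
  · rw [if_neg h, if_neg h, smul_zero]

end aux

/-- `D = { Σ_{i=0}^{n-1} ι(a_i)·b^i : a_i ∈ K }`. -/
def Dset (n : ℕ) (K : Type*) [Field K] (σ : K ≃+* K) (p : K) :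
    Set (Matrix (Fin n) (Fin n) K) :=
  {x | ∃ a : Fin n → K, x = ∑ i : Fin n, iotaMat n K σ (a i) * bMat n K p ^ (i : ℕ)}

section aux2
variable {n : ℕ} {K : Type*} [Field K] (σ : K ≃+* K) (p : K)

lemma Dset_zero : (0 : Matrix (Fin n) (Fin n) K) ∈ Dset n K σ p := by
  refine ⟨fun _ => 0, ?_⟩
  simp [iota_zero]

lemma Dset_add : ∀ x ∈ Dset n K σ p, ∀ y ∈ Dset n K σ p, x + y ∈ Dset n K σ p := by
  rintro x ⟨a, rfl⟩ y ⟨a', rfl⟩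
  refine ⟨a + a', ?_⟩
  simp only [Pi.add_apply, iota_add, add_mul, Finset.sum_add_distrib]

lemma Dset_sum {α : Type*} (s : Finset α) (f : α → Matrix (Fin n) (Fin n) K)
    (h : ∀ x ∈ s, f x ∈ Dset n K σ p) : (∑ x ∈ s, f x) ∈ Dset n K σ p :=
  Finset.sum_induction f (· ∈ Dset n K σ p)
    (fun a b ha hb => Dset_add σ p a ha b hb) (Dset_zero σ p) h

lemma term_mem (hn : 1 ≤ n) (hpfix : σ p = p) (c : K) (m : ℕ) :
    iotaMat n K σ c * bMat n K p ^ m ∈ Dset n K σ p := by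
  have hmlt : m % n < n := Nat.mod_lt _ hn
  have hbm : bMat n K p ^ m = p ^ (m / n) • bMat n K p ^ (m % n) := by
    conv_lhs => rw [← Nat.div_add_mod m n]
    rw [pow_add, pow_mul, bpow_n p hn, smul_pow, one_pow, smul_mul_assoc, one_mul]
  rw [hbm, mul_smul_comm, ← smul_mul_assoc, smul_iota σ p hpfix]
  refine ⟨fun k => if k = ⟨m % n, hmlt⟩ then p ^ (m / n) * c else 0, ?_⟩
  rw [Finset.sum_eq_single (⟨m % n, hmlt⟩ : Fin n)]
  · show iotaMat n K σ (p ^ (m / n) * c) * bMat n K p ^ (m % n) =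
      iotaMat n K σ (if (⟨m % n, hmlt⟩ : Fin n) = ⟨m % n, hmlt⟩ then p ^ (m / n) * c else 0) *
        bMat n K p ^ (m % n)
    rw [if_pos rfl]
  · intro k _ hkne
    show iotaMat n K σ (if k = ⟨m % n, hmlt⟩ then p ^ (m / n) * c else 0) *
        bMat n K p ^ (k : ℕ) = 0
    rw [if_neg hkne, iota_zero, zero_mul]
  · intro h; exact absurd (Finset.mem_univ _) h

lemma row0 (hn : 1 ≤ n) (hσ : σ ^ n = 1) (a : Fin n → K) (j : Fin n) :
    (∑ i : Fin n, iotaMat n K σ (a i) * bMat n K p ^ (i : ℕ)) ⟨0, hn⟩ j = a j := by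
  rw [Matrix.sum_apply]
  rw [Finset.sum_eq_single j]
  · unfold iotaMat
    rw [Matrix.diagonal_mul, bpow_apply p hn]
    have h0 : ((⟨0, hn⟩ : Fin n) : ℕ) = 0 := rfl
    rw [h0, Nat.zero_add, Nat.mod_eq_of_lt j.isLt, Nat.div_eq_of_lt j.isLt, pow_zero,
      if_pos rfl, mul_one, Nat.sub_zero, hσ]
    rfl
  · intro i _ hne
    unfold iotaMat
    rw [Matrix.diagonal_mul, bpow_apply p hn]
    have h0 : ((⟨0, hn⟩ : Fin n) : ℕ) = 0 := rfl
    rw [h0, Nat.zero_add, Nat.mod_eq_of_lt i.isLt,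
      if_neg (fun hh => hne (Fin.ext hh.symm)), mul_zero]
  · intro h; exact absurd (Finset.mem_univ _) h

end aux2

/-- `D` is a subring of `M_n(K)`, and the map
`(a_0,…,a_{n-1}) ↦ Σ ι(a_i)·b^i` is injective and additive. -/
theorem Dset_subring_and_injective (n : ℕ) (hn : 1 ≤ n) (K : Type*) [Field K]
    (σ : K ≃+* K) (hσ : σ ^ n = 1) (p : K) (hp : p ≠ 0) (hpfix : σ p = p) :
    (1 ∈ Dset n K σ p) ∧ (0 ∈ Dset n K σ p) ∧
    (∀ x ∈ Dset n K σ p, ∀ y ∈ Dset n K σ p, x + y ∈ Dset n K σ p) ∧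
    (∀ x ∈ Dset n K σ p, -x ∈ Dset n K σ p) ∧
    (∀ x ∈ Dset n K σ p, ∀ y ∈ Dset n K σ p, x * y ∈ Dset n K σ p) ∧
    Function.Injective
      (fun a : Fin n → K => ∑ i : Fin n, iotaMat n K σ (a i) * bMat n K p ^ (i : ℕ)) ∧
    (∀ a a' : Fin n → K,
      (∑ i : Fin n, iotaMat n K σ ((a + a') i) * bMat n K p ^ (i : ℕ)) =
        (∑ i : Fin n, iotaMat n K σ (a i) * bMat n K p ^ (i : ℕ)) +
        (∑ i : Fin n, iotaMat n K σ (a' i) * bMat n K p ^ (i : ℕ))) := by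
  refine ⟨?_, Dset_zero σ p, Dset_add σ p, ?_, ?_, ?_, ?_⟩
  · -- 1 ∈ D
    have h := term_mem σ p hn hpfix 1 0
    rwa [iota_one, pow_zero, one_mul] at h
  · -- neg
    rintro x ⟨a, rfl⟩
    refine ⟨-a, ?_⟩
    simp only [Pi.neg_apply, iota_neg, neg_mul]
    rw [Finset.sum_neg_distrib]
  · -- mul
    rintro x ⟨a, rfl⟩ y ⟨a', rfl⟩
    rw [Finset.sum_mul]
    apply Dset_sum
    intro i _
    rw [Finset.mul_sum]
    apply Dset_sum
    intro j _
    have key : iotaMat n K σ (a i) * bMat n K p ^ (i : ℕ) *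
        (iotaMat n K σ (a' j) * bMat n K p ^ (j : ℕ)) =
        iotaMat n K σ (a i * (σ⁻¹ ^ (i : ℕ)) (a' j)) * bMat n K p ^ ((i : ℕ) + (j : ℕ)) := by
      rw [mul_assoc (iotaMat n K σ (a i)) _ _,
        ← mul_assoc (bMat n K p ^ (i : ℕ)) _ _,
        bpow_iota σ p hn hσ, ← mul_assoc, ← mul_assoc, iota_mul, mul_assoc, pow_add]
    rw [key]
    exact term_mem σ p hn hpfix _ _
  · -- injective
    intro a a' h
    funext j
    have h2 : (∑ i : Fin n, iotaMat n K σ (a i) * bMat n K p ^ (i : ℕ)) ⟨0, hn⟩ j =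
        (∑ i : Fin n, iotaMat n K σ (a' i) * bMat n K p ^ (i : ℕ)) ⟨0, hn⟩ j := by
      have h' : (∑ i : Fin n, iotaMat n K σ (a i) * bMat n K p ^ (i : ℕ)) =
          ∑ i : Fin n, iotaMat n K σ (a' i) * bMat n K p ^ (i : ℕ) := h
      rw [h']
    rwa [row0 σ p hn hσ, row0 σ p hn hσ] at h2
  · -- additive
    intro a a'
    simp only [Pi.add_apply, iota_add, add_mul, Finset.sum_add_distrib]
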